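/- arXiv:2209.13938 — 2 statements merged into one kernel-verified Lean document; each statement's English description precedes it below -/
import Mathlib

section
/- Let G be an n-player game with strategy counts d and D = ∏_i d i. Suppose there exists q : ((j : Fin n) → Fin (d j)) → ℝ with q s > 0 for every profile s and with every incentive constraint strict, i.e. for every player i and all k ≠ l in Fin (d i), ∑_{s : s i = k} (X i s − X i (Function.update s i l)) · q s > 0. Then the correlated equilibrium cone C_G has nonempty topological interior in ℝ^D, and the correlated equilibrium polytope P_G has maximal dimension, i.e. the dimension of the direction of its affine span equals D − 1. -/
/-- The correlated equilibrium cone of an `n`-player game. -/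
def CorrelatedEqCone {n : ℕ} (d : Fin n → ℕ)
    (X : (i : Fin n) → ((j : Fin n) → Fin (d j)) → ℝ) :
    Set (((j : Fin n) → Fin (d j)) → ℝ) :=
  {p | (∀ s, 0 ≤ p s) ∧
    ∀ (i : Fin n) (k l : Fin (d i)),
      0 ≤ ∑ s ∈ Finset.univ.filter (fun s => s i = k),
        (X i s - X i (Function.update s i l)) * p s}

/-- The correlated equilibrium polytope of an `n`-player game. -/
def CorrelatedEqPolytope {n : ℕ} (d : Fin n → ℕ)
    (X : (i : Fin n) → ((j : Fin n) → Fin (d j)) → ℝ) :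
    Set (((j : Fin n) → Fin (d j)) → ℝ) :=
  {p ∈ CorrelatedEqCone d X | ∑ s, p s = 1}

lemma mem_interior_cone {n : ℕ} (d : Fin n → ℕ)
    (X : (i : Fin n) → ((j : Fin n) → Fin (d j)) → ℝ)
    (q : ((j : Fin n) → Fin (d j)) → ℝ)
    (hq : ∀ s, 0 < q s)
    (hstrict : ∀ (i : Fin n) (k l : Fin (d i)), k ≠ l →
      0 < ∑ s ∈ Finset.univ.filter (fun s => s i = k),
        (X i s - X i (Function.update s i l)) * q s) :
    q ∈ interior (CorrelatedEqCone d X) := by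
  classical
  rw [mem_interior]
  refine ⟨{p | (∀ s, 0 < p s) ∧ ∀ (i : Fin n) (k l : Fin (d i)), k ≠ l →
      0 < ∑ s ∈ Finset.univ.filter (fun s => s i = k),
        (X i s - X i (Function.update s i l)) * p s}, ?_, ?_, ⟨hq, hstrict⟩⟩
  · rintro p ⟨h1, h2⟩
    refine ⟨fun s => (h1 s).le, fun i k l => ?_⟩
    by_cases h : k = l
    · subst h
      refine le_of_eq (Finset.sum_eq_zero fun s hs => ?_).symm
      simp only [Finset.mem_filter] at hs
      rw [← hs.2, Function.update_eq_self, sub_self, zero_mul]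
    · exact (h2 i k l h).le
  · have heq : {p : ((j : Fin n) → Fin (d j)) → ℝ | (∀ s, 0 < p s) ∧
        ∀ (i : Fin n) (k l : Fin (d i)), k ≠ l →
        0 < ∑ s ∈ Finset.univ.filter (fun s => s i = k),
          (X i s - X i (Function.update s i l)) * p s}
        = (⋂ s, {p : ((j : Fin n) → Fin (d j)) → ℝ | 0 < p s}) ∩
          ⋂ i, ⋂ k, ⋂ l, {p : ((j : Fin n) → Fin (d j)) → ℝ | k ≠ l →
            0 < ∑ s ∈ Finset.univ.filter (fun s => s i = k),
              (X i s - X i (Function.update s i l)) * p s} := by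
      ext p; simp [Set.mem_iInter]
    rw [heq]
    refine IsOpen.inter (isOpen_iInter_of_finite fun s => ?_)
      (isOpen_iInter_of_finite fun i => isOpen_iInter_of_finite fun k =>
        isOpen_iInter_of_finite fun l => ?_)
    · exact isOpen_lt continuous_const (continuous_apply s)
    · by_cases h : k = l
      · subst h; simp
      · have : {p : ((j : Fin n) → Fin (d j)) → ℝ | k ≠ l →
            0 < ∑ s ∈ Finset.univ.filter (fun s => s i = k),
              (X i s - X i (Function.update s i l)) * p s}
            = {p : ((j : Fin n) → Fin (d j)) → ℝ |
            0 < ∑ s ∈ Finset.univ.filter (fun s => s i = k),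
              (X i s - X i (Function.update s i l)) * p s} := by
          ext p; simp [h]
        rw [this]
        exact isOpen_lt continuous_const
          (continuous_finset_sum _ fun s _ => continuous_const.mul (continuous_apply s))

/-- If there is a strictly positive point satisfying all incentive constraints strictly,
then the correlated equilibrium cone has nonempty interior and the correlated
equilibrium polytope has maximal dimension `D - 1`. -/
theorem cone_interior_nonempty_and_polytope_maximal_dim
    {n : ℕ} (d : Fin n → ℕ) (hd : ∀ i, 1 ≤ d i)
    (X : (i : Fin n) → ((j : Fin n) → Fin (d j)) → ℝ)
    (q : ((j : Fin n) → Fin (d j)) → ℝ)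
    (hq : ∀ s, 0 < q s)
    (hstrict : ∀ (i : Fin n) (k l : Fin (d i)), k ≠ l →
      0 < ∑ s ∈ Finset.univ.filter (fun s => s i = k),
        (X i s - X i (Function.update s i l)) * q s) :
    (interior (CorrelatedEqCone d X)).Nonempty ∧
      Module.finrank ℝ (affineSpan ℝ (CorrelatedEqPolytope d X)).direction
        = (∏ i, d i) - 1 := by
  classical
  haveI hne : Nonempty ((j : Fin n) → Fin (d j)) := ⟨fun j => ⟨0, hd j⟩⟩
  refine ⟨⟨q, mem_interior_cone d X q hq hstrict⟩, ?_⟩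
  -- normalized point
  have hSq : 0 < ∑ s, q s := Finset.sum_pos (fun s _ => hq s) Finset.univ_nonempty
  set c : ℝ := (∑ s, q s)⁻¹ with hc
  have hc0 : 0 < c := inv_pos.mpr hSq
  set q' : ((j : Fin n) → Fin (d j)) → ℝ := c • q with hq'def
  have hq'pos : ∀ s, 0 < q' s := fun s => mul_pos hc0 (hq s)
  have hq'strict : ∀ (i : Fin n) (k l : Fin (d i)), k ≠ l →
      0 < ∑ s ∈ Finset.univ.filter (fun s => s i = k),
        (X i s - X i (Function.update s i l)) * q' s := by
    intro i k l hkl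
    have h := hstrict i k l hkl
    have : ∑ s ∈ Finset.univ.filter (fun s => s i = k),
        (X i s - X i (Function.update s i l)) * q' s
        = c * ∑ s ∈ Finset.univ.filter (fun s => s i = k),
        (X i s - X i (Function.update s i l)) * q s := by
      rw [Finset.mul_sum]
      refine Finset.sum_congr rfl fun s _ => ?_
      simp [hq'def, Pi.smul_apply]; ring
    rw [this]
    exact mul_pos hc0 h
  have hq'sum : ∑ s, q' s = 1 := by
    have : ∑ s, q' s = c * ∑ s, q s := by
      rw [Finset.mul_sum]; exact Finset.sum_congr rfl fun s _ => by simp [hq'def]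
    rw [this, hc, inv_mul_cancel₀ hSq.ne']
  have hq'int := mem_interior_cone d X q' hq'pos hq'strict
  have hq'mem : q' ∈ CorrelatedEqPolytope d X := ⟨interior_subset hq'int, hq'sum⟩
  -- sum linear map
  let L : (((j : Fin n) → Fin (d j)) → ℝ) →ₗ[ℝ] ℝ :=
    { toFun := fun p => ∑ s, p s,
      map_add' := fun p r => by simp [Finset.sum_add_distrib],
      map_smul' := fun t p => by simp [Finset.mul_sum] }
  have hdir : (affineSpan ℝ (CorrelatedEqPolytope d X)).direction = LinearMap.ker L := by
    apply le_antisymm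
    · rw [direction_affineSpan, vectorSpan_def, Submodule.span_le]
      rintro v ⟨p, hp, p', hp', rfl⟩
      simp only [SetLike.mem_coe, LinearMap.mem_ker, vsub_eq_sub]
      show ∑ s, (p - p') s = 0
      simp only [Pi.sub_apply]
      rw [Finset.sum_sub_distrib, hp.2, hp'.2, sub_self]
    · intro v hv
      rw [LinearMap.mem_ker] at hv
      have hv' : ∑ s, v s = 0 := hv
      obtain ⟨ε, hε, hball⟩ := Metric.mem_nhds_iff.mp (mem_interior_iff_mem_nhds.mp hq'int)
      by_cases hv0 : v = 0
      · simp [hv0]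
      have hnv : 0 < ‖v‖ := norm_pos_iff.mpr hv0
      set t : ℝ := ε / (2 * ‖v‖) with ht'
      have ht : 0 < t := div_pos hε (by positivity)
      have hmem : q' + t • v ∈ CorrelatedEqPolytope d X := by
        refine ⟨hball ?_, ?_⟩
        · rw [Metric.mem_ball, dist_eq_norm, add_sub_cancel_left, norm_smul,
            Real.norm_eq_abs, abs_of_pos ht, ht']
          have hx : ε / (2 * ‖v‖) * ‖v‖ = ε / 2 := by
            field_simp
          rw [hx]
          linarith
        · show ∑ s, (q' + t • v) s = 1
          simp only [Pi.add_apply, Pi.smul_apply, smul_eq_mul]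
          rw [Finset.sum_add_distrib, hq'sum, ← Finset.mul_sum, hv', mul_zero, add_zero]
      rw [direction_affineSpan]
      have hsub : (q' + t • v) -ᵥ q' ∈ vectorSpan ℝ (CorrelatedEqPolytope d X) :=
        vsub_mem_vectorSpan ℝ hmem hq'mem
      rw [vsub_eq_sub, add_sub_cancel_left] at hsub
      have := Submodule.smul_mem _ t⁻¹ hsub
      rwa [inv_smul_smul₀ ht.ne'] at this
  rw [hdir]
  have hsurj : Function.Surjective L := by
    intro r
    obtain ⟨s₀⟩ := hne
    refine ⟨Pi.single s₀ r, ?_⟩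
    show ∑ s, Pi.single s₀ r s = r
    simp [Finset.sum_pi_single]
  have hrn := LinearMap.finrank_range_add_finrank_ker L
  rw [LinearMap.range_eq_top.mpr hsurj, finrank_top, Module.finrank_self] at hrn
  have hcard : Module.finrank ℝ (((j : Fin n) → Fin (d j)) → ℝ) = ∏ i, d i := by
    rw [Module.finrank_fintype_fun_eq_card, Fintype.card_pi]
    simp
  rw [hcard] at hrn
  omega
end

section
/- Let G be an n-player game with strategy counts d and D = ∏_i d i. Assume that for every player i and every pair k ≠ l in Fin (d i) the payoff-difference vector is not identically zero, i.e. there exists a profile s with s i = k such that X i s ≠ X i (Function.update s i l). If the correlated equilibrium cone C_G has nonempty topological interior in ℝ^D, then there exists q with q s > 0 for every profile s and with every incentive constraint strict: for every player i and all k ≠ l in Fin (d i), ∑_{s : s i = k} (X i s − X i (Function.update s i l)) · q s > 0. -/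
/-- If no payoff-difference vector is identically zero and the correlated equilibrium
cone has nonempty interior, then there is a strictly positive point satisfying all
incentive constraints strictly. -/
theorem exists_strict_point_of_cone_interior_nonempty
    {n : ℕ} (d : Fin n → ℕ) (hd : ∀ i, 1 ≤ d i)
    (X : (i : Fin n) → ((j : Fin n) → Fin (d j)) → ℝ)
    (hX : ∀ (i : Fin n) (k l : Fin (d i)), k ≠ l →
      ∃ s : (j : Fin n) → Fin (d j), s i = k ∧ X i s ≠ X i (Function.update s i l))
    (hint : (interior (CorrelatedEqCone d X)).Nonempty) :
    ∃ q : ((j : Fin n) → Fin (d j)) → ℝ,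
      (∀ s, 0 < q s) ∧
      ∀ (i : Fin n) (k l : Fin (d i)), k ≠ l →
        0 < ∑ s ∈ Finset.univ.filter (fun s => s i = k),
          (X i s - X i (Function.update s i l)) * q s := by
  obtain ⟨p, hp⟩ := hint
  rw [mem_interior_iff_mem_nhds, Metric.mem_nhds_iff] at hp
  obtain ⟨ε, hε, hball⟩ := hp
  have hhalf : (0:ℝ) ≤ ε / 2 := by linarith
  -- a general perturbation lemma: updating p at one coordinate by at most ε/2 stays in the cone
  have hperturb : ∀ (s₀ : (j : Fin n) → Fin (d j)) (δ : ℝ), |δ| ≤ ε / 2 →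
      Function.update p s₀ (p s₀ + δ) ∈ CorrelatedEqCone d X := by
    intro s₀ δ hδ
    apply hball
    rw [Metric.mem_ball]
    have : dist (Function.update p s₀ (p s₀ + δ)) p ≤ ε / 2 := by
      apply (dist_pi_le_iff hhalf).2
      intro b
      by_cases hb : b = s₀
      · subst hb
        simp [Real.dist_eq]
        simpa using hδ
      · simp [Function.update_of_ne hb, hhalf]
    linarith
  refine ⟨p, ?_, ?_⟩
  · intro s
    have := (hperturb s (-(ε/2)) (by rw [abs_neg, abs_of_nonneg hhalf])).1 s
    simp only [Function.update_self] at this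
    linarith
  · intro i k l hkl
    obtain ⟨s₀, hs₀k, hs₀⟩ := hX i k l hkl
    set c := X i s₀ - X i (Function.update s₀ i l) with hc
    have hcne : c ≠ 0 := sub_ne_zero.mpr hs₀
    set δ : ℝ := if 0 < c then -(ε/2) else ε/2 with hδdef
    have hδabs : |δ| ≤ ε / 2 := by
      rcases lt_or_ge 0 c with h | h
      · simp [hδdef, h, abs_of_nonneg hhalf]
      · simp [hδdef, not_lt.mpr h, abs_of_nonneg hhalf]
    have hcδ : c * δ < 0 := by
      rcases lt_or_gt_of_ne hcne with h | h
      · have hδ : δ = ε/2 := by simp [hδdef, not_lt.mpr h.le]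
        rw [hδ]
        exact mul_neg_of_neg_of_pos h (by linarith)
      · have hδ : δ = -(ε/2) := by simp [hδdef, h]
        rw [hδ]
        nlinarith
    have hmem := (hperturb s₀ δ hδabs).2 i k l
    have hs₀F : s₀ ∈ Finset.univ.filter (fun s => s i = k) := by
      simp [hs₀k]
    have hsplit : ∑ s ∈ Finset.univ.filter (fun s => s i = k),
          (X i s - X i (Function.update s i l)) * (Function.update p s₀ (p s₀ + δ)) s
        = (∑ s ∈ Finset.univ.filter (fun s => s i = k),
            (X i s - X i (Function.update s i l)) * p s) + c * δ := by
      have h1 : ∑ s ∈ Finset.univ.filter (fun s => s i = k),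
            (X i s - X i (Function.update s i l)) * (Function.update p s₀ (p s₀ + δ)) s
          = ∑ s ∈ Finset.univ.filter (fun s => s i = k),
              ((X i s - X i (Function.update s i l)) * p s
              + if s = s₀ then c * δ else 0) := by
        apply Finset.sum_congr rfl
        intro s hs
        by_cases h : s = s₀
        · subst h
          simp only [Function.update_self, eq_self_iff_true, if_true, hc]
          ring
        · simp [Function.update_of_ne h, h]
      rw [h1, Finset.sum_add_distrib,
        Finset.sum_ite_eq' (Finset.univ.filter (fun s => s i = k)) s₀ (fun _ => c * δ),
        if_pos hs₀F]
    rw [hsplit] at hmem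
    linarith
end
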